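/- Let U and Y be complex Hilbert spaces, L : U → Y and S : Y → Y bounded linear operators, α > 0, and G, G_n : Y → Y (n ∈ ℕ) bounded linear operators such that G_n y → G y and G_n* y → G* y in Y for every y ∈ Y as n → ∞. Set Λ_n := α·I_U + L*G_n*G_n L, Λ_G := α·I_U + L*G*G L, P_n := S* ∘ G_n*G_n ∘ (I_Y − L Λ_n⁻¹ L* G_n*G_n) ∘ S, and P := S* ∘ G*G ∘ (I_Y − L Λ_G⁻¹ L* G*G) ∘ S. Then for every x ∈ Y one has P_n x → P x in Y as n → ∞. -/

import Mathlib

open ContinuousLinearMap Filter Topology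

/-- If `T n → T0` strongly, and `y n → y0`, then `T n (y n) → T0 y0`
(via the Banach–Steinhaus uniform bound). -/
lemma tendsto_clm_apply_of_tendsto
    {E F : Type*} [NormedAddCommGroup E] [NormedSpace ℂ E] [CompleteSpace E]
    [NormedAddCommGroup F] [NormedSpace ℂ F]
    {T : ℕ → E →L[ℂ] F} {T0 : E →L[ℂ] F}
    (hT : ∀ x : E, Tendsto (fun n => T n x) atTop (𝓝 (T0 x)))
    {y : ℕ → E} {y0 : E} (hy : Tendsto y atTop (𝓝 y0)) :
    Tendsto (fun n => T n (y n)) atTop (𝓝 (T0 y0)) := by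
  obtain ⟨C, hC⟩ : ∃ C, ∀ n, ‖T n‖ ≤ C := by
    apply banach_steinhaus
    intro x
    obtain ⟨C, hC⟩ := (((hT x).norm).bddAbove_range)
    exact ⟨C, fun n => hC ⟨n, rfl⟩⟩
  rw [tendsto_iff_norm_sub_tendsto_zero]
  have hbound : ∀ n, ‖T n (y n) - T0 y0‖ ≤ C * ‖y n - y0‖ + ‖T n y0 - T0 y0‖ := by
    intro n
    have h : T n (y n) - T0 y0 = T n (y n - y0) + (T n y0 - T0 y0) := by
      simp [map_sub]
    rw [h]
    refine (norm_add_le _ _).trans (add_le_add ?_ le_rfl)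
    exact ((T n).le_opNorm _).trans (mul_le_mul_of_nonneg_right (hC n) (norm_nonneg _))
  have h0 : Tendsto (fun n => C * ‖y n - y0‖ + ‖T n y0 - T0 y0‖) atTop (𝓝 0) := by
    have h1 : Tendsto (fun n => ‖y n - y0‖) atTop (𝓝 0) :=
      tendsto_iff_norm_sub_tendsto_zero.mp hy
    have h2 : Tendsto (fun n => ‖T n y0 - T0 y0‖) atTop (𝓝 0) :=
      tendsto_iff_norm_sub_tendsto_zero.mp (hT y0)
    simpa using (h1.const_mul C).add h2
  exact squeeze_zero (fun n => norm_nonneg _) hbound h0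

/-- Coercivity: `α‖u‖² ≤ ‖u‖‖Λu‖` for `Λ = α•1 + L*A*AL`. -/
lemma coercive_bound
    {U Y : Type*}
    [NormedAddCommGroup U] [InnerProductSpace ℂ U] [CompleteSpace U]
    [NormedAddCommGroup Y] [InnerProductSpace ℂ Y] [CompleteSpace Y]
    (L : U →L[ℂ] Y) (α : ℝ) (A : Y →L[ℂ] Y)
    (Λ : U →L[ℂ] U)
    (hΛ : Λ = (α : ℂ) • (1 : U →L[ℂ] U) +
      ((ContinuousLinearMap.adjoint L).comp
        ((ContinuousLinearMap.adjoint A).comp (A.comp L))))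
    (u : U) : α * ‖u‖^2 ≤ ‖u‖ * ‖Λ u‖ := by
  have h2 : α * ‖u‖^2 ≤ RCLike.re (inner (𝕜 := ℂ) u (Λ u)) := by
    rw [hΛ]
    simp only [ContinuousLinearMap.add_apply, ContinuousLinearMap.smul_apply,
      ContinuousLinearMap.one_apply, ContinuousLinearMap.coe_comp', Function.comp_apply,
      inner_add_right, inner_smul_right, ContinuousLinearMap.adjoint_inner_right, map_add]
    have e1 : RCLike.re ((α : ℂ) * inner (𝕜 := ℂ) u u) = α * ‖u‖^2 := by
      rw [inner_self_eq_norm_sq_to_K]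
      simp [RCLike.mul_re, ← Complex.ofReal_pow]
    have e2 : 0 ≤ RCLike.re (inner (𝕜 := ℂ) (A (L u)) (A (L u))) := inner_self_nonneg
    linarith [e1, e2]
  calc α * ‖u‖^2 ≤ RCLike.re (inner (𝕜 := ℂ) u (Λ u)) := h2
    _ ≤ ‖(inner (𝕜 := ℂ) u (Λ u) : ℂ)‖ := RCLike.re_le_norm _
    _ ≤ ‖u‖ * ‖Λ u‖ := norm_inner_le_norm _ _

/-- If `G_n → G` and `G_n* → G*` strongly on `Y`, then the Riccati
(optimal cost) operators `P_n = S* G_n*G_n (I − L Λ_n⁻¹ L* G_n*G_n) S` converge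
strongly to `P = S* G*G (I − L Λ_G⁻¹ L* G*G) S`, where `Λ_n = α·I + L*G_n*G_nL`
and `Λ_G = α·I + L*G*GL`. -/
theorem stmt18
    {U Y : Type*}
    [NormedAddCommGroup U] [InnerProductSpace ℂ U] [CompleteSpace U]
    [NormedAddCommGroup Y] [InnerProductSpace ℂ Y] [CompleteSpace Y]
    (L : U →L[ℂ] Y) (S : Y →L[ℂ] Y) (α : ℝ) (hα : 0 < α)
    (G : Y →L[ℂ] Y) (Gn : ℕ → (Y →L[ℂ] Y))
    (hGn : ∀ y : Y, Tendsto (fun n => Gn n y) atTop (𝓝 (G y)))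
    (hGnstar : ∀ y : Y, Tendsto
      (fun n => (ContinuousLinearMap.adjoint (Gn n)) y) atTop
      (𝓝 ((ContinuousLinearMap.adjoint G) y)))
    (Λn : ℕ → (U →L[ℂ] U)) (ΛG : U →L[ℂ] U)
    (hΛn : ∀ n : ℕ, Λn n = (α : ℂ) • (1 : U →L[ℂ] U) +
      ((ContinuousLinearMap.adjoint L).comp
        ((ContinuousLinearMap.adjoint (Gn n)).comp ((Gn n).comp L))))
    (hΛG : ΛG = (α : ℂ) • (1 : U →L[ℂ] U) +
      ((ContinuousLinearMap.adjoint L).comp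
        ((ContinuousLinearMap.adjoint G).comp (G.comp L))))
    (Λninv : ℕ → (U →L[ℂ] U)) (ΛGinv : U →L[ℂ] U)
    (hninv₁ : ∀ n : ℕ, (Λninv n).comp (Λn n) = 1)
    (hninv₂ : ∀ n : ℕ, (Λn n).comp (Λninv n) = 1)
    (hGinv₁ : ΛGinv.comp ΛG = 1) (hGinv₂ : ΛG.comp ΛGinv = 1)
    (Pn : ℕ → (Y →L[ℂ] Y)) (P : Y →L[ℂ] Y)
    (hPn : ∀ n : ℕ, Pn n = ((ContinuousLinearMap.adjoint S).comp
      (((ContinuousLinearMap.adjoint (Gn n)).comp (Gn n)).comp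
        ((1 : Y →L[ℂ] Y) - L.comp ((Λninv n).comp
          ((ContinuousLinearMap.adjoint L).comp
            ((ContinuousLinearMap.adjoint (Gn n)).comp (Gn n))))))).comp S)
    (hP : P = ((ContinuousLinearMap.adjoint S).comp
      (((ContinuousLinearMap.adjoint G).comp G).comp
        ((1 : Y →L[ℂ] Y) - L.comp (ΛGinv.comp
          ((ContinuousLinearMap.adjoint L).comp
            ((ContinuousLinearMap.adjoint G).comp G)))))).comp S) :
    ∀ x : Y, Tendsto (fun n => (Pn n) x) atTop (𝓝 (P x)) := by
  -- uniform bound on the inverses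
  have hbound : ∀ (n : ℕ) (v : U), α * ‖Λninv n v‖ ≤ ‖v‖ := by
    intro n v
    set u := Λninv n v with hu
    have huv : Λn n u = v := by
      have := congrArg (fun T : U →L[ℂ] U => T v) (hninv₂ n)
      simpa using this
    have hc : α * ‖u‖^2 ≤ ‖u‖ * ‖Λn n u‖ := coercive_bound L α (Gn n) (Λn n) (hΛn n) u
    rw [huv] at hc
    rcases eq_or_lt_of_le (norm_nonneg u) with h0 | h0
    · rw [← h0]; simpa using norm_nonneg v
    · nlinarith
  -- strong convergence of Λn
  have hΛconv : ∀ u : U, Tendsto (fun n => Λn n u) atTop (𝓝 (ΛG u)) := by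
    intro u
    have h1 : Tendsto (fun n => Gn n (L u)) atTop (𝓝 (G (L u))) := hGn _
    have h2 := tendsto_clm_apply_of_tendsto hGnstar h1
    have h3 := (((ContinuousLinearMap.adjoint L).continuous.tendsto _).comp h2)
    have h4 := (tendsto_const_nhds (x := (α : ℂ) • u) (f := atTop)).add h3
    have e1 : ∀ n, Λn n u = (α : ℂ) • u +
        (ContinuousLinearMap.adjoint L)
          ((ContinuousLinearMap.adjoint (Gn n)) (Gn n (L u))) := by
      intro n; rw [hΛn n]; rfl
    have e2 : ΛG u = (α : ℂ) • u +
        (ContinuousLinearMap.adjoint L)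
          ((ContinuousLinearMap.adjoint G) (G (L u))) := by
      rw [hΛG]; rfl
    rw [e2]
    exact h4.congr (fun n => (e1 n).symm)
  -- strong convergence of the inverses
  have hinvconv : ∀ v : U, Tendsto (fun n => Λninv n v) atTop (𝓝 (ΛGinv v)) := by
    intro v
    set w := ΛGinv v with hw
    have hwv : ΛG w = v := by
      have := congrArg (fun T : U →L[ℂ] U => T v) hGinv₂
      simpa using this
    rw [tendsto_iff_norm_sub_tendsto_zero]
    have hid : ∀ n, Λninv n v - ΛGinv v = Λninv n (ΛG w - Λn n w) := by
      intro n
      have h1 : Λninv n (Λn n w) = w := by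
        have := congrArg (fun T : U →L[ℂ] U => T w) (hninv₁ n)
        simpa using this
      rw [map_sub, h1, hwv]
    have hb : ∀ n, ‖Λninv n v - ΛGinv v‖ ≤ α⁻¹ * ‖ΛG w - Λn n w‖ := by
      intro n
      rw [hid n]
      have := hbound n (ΛG w - Λn n w)
      rw [← le_div_iff₀' hα] at this
      simpa [div_eq_inv_mul] using this
    have h0 : Tendsto (fun n => α⁻¹ * ‖ΛG w - Λn n w‖) atTop (𝓝 0) := by
      have h1 : Tendsto (fun n => ‖Λn n w - ΛG w‖) atTop (𝓝 0) :=
        tendsto_iff_norm_sub_tendsto_zero.mp (hΛconv w)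
      have h2 : Tendsto (fun n => ‖ΛG w - Λn n w‖) atTop (𝓝 0) := by
        simpa [norm_sub_rev] using h1
      simpa using h2.const_mul (α⁻¹)
    exact squeeze_zero (fun n => norm_nonneg _) hb h0
  -- the chain
  intro x
  set y := S x with hy
  have c1 : Tendsto (fun n => Gn n y) atTop (𝓝 (G y)) := hGn y
  have c2 := tendsto_clm_apply_of_tendsto hGnstar c1
  have c3 := ((ContinuousLinearMap.adjoint L).continuous.tendsto _).comp c2
  have c4 := tendsto_clm_apply_of_tendsto hinvconv c3
  have c5 := (L.continuous.tendsto _).comp c4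
  have c6 := (tendsto_const_nhds (x := y) (f := atTop)).sub c5
  have c7 := tendsto_clm_apply_of_tendsto hGn c6
  have c8 := tendsto_clm_apply_of_tendsto hGnstar c7
  have c9 := ((ContinuousLinearMap.adjoint S).continuous.tendsto _).comp c8
  have eP : P x = (ContinuousLinearMap.adjoint S)
      ((ContinuousLinearMap.adjoint G) (G (y - L (ΛGinv
        ((ContinuousLinearMap.adjoint L) ((ContinuousLinearMap.adjoint G) (G y))))))) := by
    rw [hP]; rfl
  have ePn : ∀ n, Pn n x = (ContinuousLinearMap.adjoint S)
      ((ContinuousLinearMap.adjoint (Gn n)) (Gn n (y - L (Λninv n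
        ((ContinuousLinearMap.adjoint L)
          ((ContinuousLinearMap.adjoint (Gn n)) (Gn n y))))))) := by
    intro n; rw [hPn n]; rfl
  rw [eP]
  exact c9.congr (fun n => (ePn n).symm)
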